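/- Let Γ be a finite simplicial graph and let Γᵉ be its extension graph. The clique number of Γᵉ equals the clique number of Γ. -/

import Mathlib

/-- Commutation relations of the right-angled Artin group on `Γ`. -/
def raagRels {V : Type*} (Γ : SimpleGraph V) : Set (FreeGroup V) :=
  {r | ∃ u v : V, Γ.Adj u v ∧
    r = FreeGroup.of u * FreeGroup.of v * (FreeGroup.of u)⁻¹ * (FreeGroup.of v)⁻¹}

/-- The right-angled Artin group (partially commutative group) on the graph `Γ`. -/
abbrev RAAG {V : Type*} (Γ : SimpleGraph V) : Type _ := PresentedGroup (raagRels Γ)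

/-- The standard generator of `RAAG Γ` corresponding to a vertex `v`. -/
def RAAG.gen {V : Type*} (Γ : SimpleGraph V) (v : V) : RAAG Γ := PresentedGroup.of v

/-- Vertices of the extension graph: conjugates of standard generators in `RAAG Γ`. -/
def ExtVertex {V : Type*} (Γ : SimpleGraph V) : Type _ :=
  {g : RAAG Γ // ∃ (x : V) (h : RAAG Γ), g = h⁻¹ * RAAG.gen Γ x * h}

/-- The extension graph `Γᵉ`: edges between distinct commuting conjugates of generators. -/
def extGraph {V : Type*} (Γ : SimpleGraph V) : SimpleGraph (ExtVertex Γ) where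
  Adj u v := u ≠ v ∧ Commute u.val v.val
  symm := ⟨fun u v h => ⟨h.1.symm, h.2.symm⟩⟩
  loopless := ⟨fun u h => h.1 rfl⟩

open Subgroup

namespace RaagAux

variable {V : Type*} {Γ : SimpleGraph V}

theorem gen_commute_of_adj {u v : V} (h : Γ.Adj u v) :
    Commute (RAAG.gen Γ u) (RAAG.gen Γ v) := by
  have hrel : (FreeGroup.of u * FreeGroup.of v * (FreeGroup.of u)⁻¹ * (FreeGroup.of v)⁻¹ :
      FreeGroup V) ∈ raagRels Γ := ⟨u, v, h, rfl⟩
  have h1 : PresentedGroup.mk (raagRels Γ)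
      (FreeGroup.of u * FreeGroup.of v * (FreeGroup.of u)⁻¹ * (FreeGroup.of v)⁻¹) = 1 :=
    (QuotientGroup.eq_one_iff _).2 (Subgroup.subset_normalClosure hrel)
  have h2 : RAAG.gen Γ u * RAAG.gen Γ v * (RAAG.gen Γ u)⁻¹ * (RAAG.gen Γ v)⁻¹ = 1 := by
    simpa [map_mul, map_inv, RAAG.gen, PresentedGroup.of] using h1
  rw [← commutatorElement_def, commutatorElement_eq_one_iff_commute] at h2
  exact h2

/-- Universal property of the RAAG. -/
def raagLift {G : Type*} [Group G] (Γ : SimpleGraph V) (f : V → G)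
    (hf : ∀ u v, Γ.Adj u v → Commute (f u) (f v)) : RAAG Γ →* G :=
  PresentedGroup.toGroup (f := f) (by
    rintro r ⟨u, v, huv, rfl⟩
    simp only [map_mul, map_inv, FreeGroup.lift_apply_of]
    rw [← commutatorElement_def, commutatorElement_eq_one_iff_commute]
    exact hf u v huv)

@[simp] theorem raagLift_gen {G : Type*} [Group G] (Γ : SimpleGraph V) (f : V → G)
    (hf : ∀ u v, Γ.Adj u v → Commute (f u) (f v)) (v : V) :
    raagLift Γ f hf (RAAG.gen Γ v) = f v :=
  PresentedGroup.toGroup.of _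

theorem raag_hom_ext {G : Type*} [Group G] {φ ψ : RAAG Γ →* G}
    (h : ∀ v, φ (RAAG.gen Γ v) = ψ (RAAG.gen Γ v)) : φ = ψ :=
  PresentedGroup.ext h

open Classical in
/-- The exponent sum at a vertex `y`. -/
noncomputable def expSum (Γ : SimpleGraph V) (y : V) : RAAG Γ →* Multiplicative ℤ :=
  raagLift Γ (fun v => Multiplicative.ofAdd (if v = y then 1 else 0))
    (fun _ _ _ => Commute.all _ _)

open Classical in
@[simp] theorem expSum_gen (y v : V) :
    expSum Γ y (RAAG.gen Γ v) = Multiplicative.ofAdd (if v = y then 1 else 0) :=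
  raagLift_gen ..

theorem expSum_conj (y : V) (k g : RAAG Γ) :
    expSum Γ y (k⁻¹ * g * k) = expSum Γ y g := by
  simp [map_mul, map_inv, mul_comm, mul_assoc, mul_left_comm]

open Classical in
theorem gen_injective (Γ : SimpleGraph V) : Function.Injective (RAAG.gen Γ) := by
  intro u v h
  by_contra hne
  have h2 := congrArg (expSum Γ v) h
  rw [expSum_gen, expSum_gen, if_pos rfl, if_neg hne] at h2
  exact absurd (Multiplicative.ofAdd.injective h2) (by norm_num)

theorem expSum_eq_one_of_mem_closure {S : Set V} {y : V} (hy : y ∉ S) {g : RAAG Γ}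
    (hg : g ∈ Subgroup.closure (RAAG.gen Γ '' S)) : expSum Γ y g = 1 := by
  have : Subgroup.closure (RAAG.gen Γ '' S) ≤ (expSum Γ y).ker := by
    rw [Subgroup.closure_le]
    rintro _ ⟨v, hv, rfl⟩
    have hvy : v ≠ y := fun h => hy (h ▸ hv)
    show RAAG.gen Γ v ∈ (expSum Γ y).ker
    rw [MonoidHom.mem_ker, expSum_gen, if_neg hvy]
    rfl
  simpa [MonoidHom.mem_ker] using this hg

end RaagAux

namespace RaagAux

variable {V : Type*} {Γ : SimpleGraph V}

/-- Generic: an element commutes with everything in a closure if it commutes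
with the generators. -/
theorem commute_of_mem_closure {G : Type*} [Group G] {c : G} {s : Set G}
    (h : ∀ g ∈ s, Commute c g) {x : G} (hx : x ∈ Subgroup.closure s) : Commute c x := by
  have : Subgroup.closure s ≤ Subgroup.centralizer {c} := by
    rw [Subgroup.closure_le]
    intro g hg
    exact Subgroup.mem_centralizer_iff.2 (by rintro y rfl; exact (h g hg).eq)
  exact Subgroup.mem_centralizer_iff.1 (this hx) c rfl

/-- An element of a RAAG commuting with all generators commutes with everything. -/
theorem commute_of_forall_gen {W : Type*} {Δ : SimpleGraph W} {c : RAAG Δ}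
    (h : ∀ v, Commute c (RAAG.gen Δ v)) (g : RAAG Δ) : Commute c g := by
  have hg : g ∈ Subgroup.closure (Set.range (RAAG.gen Δ)) := by
    rw [show Set.range (RAAG.gen Δ) = Set.range (PresentedGroup.of) from rfl,
      PresentedGroup.closure_range_of]
    trivial
  exact commute_of_mem_closure (by rintro _ ⟨v, rfl⟩; exact h v) hg

/-- Inclusion of the RAAG of an induced subgraph. -/
noncomputable def inclHom (S : Set V) : RAAG (Γ.induce S) →* RAAG Γ :=
  raagLift _ (fun v => RAAG.gen Γ v.val)
    (fun _ _ h => gen_commute_of_adj (by exact h))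

@[simp] theorem inclHom_gen (S : Set V) (v : ↥S) :
    inclHom (Γ := Γ) S (RAAG.gen _ v) = RAAG.gen Γ v.val := raagLift_gen ..

open Classical in
/-- Retraction onto the RAAG of an induced subgraph. -/
noncomputable def projHom (S : Set V) : RAAG Γ →* RAAG (Γ.induce S) :=
  raagLift Γ (fun v => if h : v ∈ S then RAAG.gen (Γ.induce S) ⟨v, h⟩ else 1)
    (by
      intro u v huv
      beta_reduce
      by_cases hu : u ∈ S
      · by_cases hv : v ∈ S
        · rw [dif_pos hu, dif_pos hv]
          exact gen_commute_of_adj (by exact huv)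
        · rw [dif_neg hv]; exact Commute.one_right _
      · rw [dif_neg hu]; exact Commute.one_left _)

open Classical in
@[simp] theorem projHom_gen (S : Set V) (v : V) :
    projHom (Γ := Γ) S (RAAG.gen Γ v) =
      if h : v ∈ S then RAAG.gen (Γ.induce S) ⟨v, h⟩ else 1 := raagLift_gen ..

theorem projHom_inclHom (S : Set V) (g : RAAG (Γ.induce S)) :
    projHom (Γ := Γ) S (inclHom S g) = g := by
  have : (projHom (Γ := Γ) S).comp (inclHom S) = MonoidHom.id _ := by
    apply raag_hom_ext
    intro v
    simp [MonoidHom.comp_apply, v.2]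
  exact DFunLike.congr_fun this g

theorem inclHom_injective (S : Set V) : Function.Injective (inclHom (Γ := Γ) S) :=
  Function.LeftInverse.injective (projHom_inclHom S)

theorem closure_gen_image_eq_range (S : Set V) :
    Subgroup.closure (RAAG.gen Γ '' S) = (inclHom (Γ := Γ) S).range := by
  apply le_antisymm
  · rw [Subgroup.closure_le]
    rintro _ ⟨v, hv, rfl⟩
    exact ⟨RAAG.gen _ ⟨v, hv⟩, by simp⟩
  · rw [MonoidHom.range_eq_map, ← PresentedGroup.closure_range_of,
      MonoidHom.map_closure]
    rw [Subgroup.closure_le]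
    rintro _ ⟨_, ⟨v, rfl⟩, rfl⟩
    exact Subgroup.subset_closure ⟨v.val, v.2, (inclHom_gen S v).symm⟩

end RaagAux

namespace RaagAux

open HNNExtension HNNExtension.NormalWord

variable {G : Type*} [Group G] {A : Subgroup G}

theorem rprod_def (w : ReducedWord G A A) : ReducedWord.prod (MulEquiv.refl (↥A)) w =
    HNNExtension.of w.head * (w.toList.map
      (fun x : ℤˣ × G =>
        (t : HNNExtension G A A (MulEquiv.refl (↥A))) ^ ((x.1 : ℤˣ) : ℤ) *
          HNNExtension.of x.2)).prod := rfl

theorem t_comm_of {a : G} (ha : a ∈ A) :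
    Commute (t : HNNExtension G A A (MulEquiv.refl (↥A))) (of a) := by
  have := t_mul_of (φ := (MulEquiv.refl (↥A))) ⟨a, ha⟩
  simpa [Commute, SemiconjBy] using this

theorem exists_reducedWord (g : HNNExtension G A A (MulEquiv.refl (↥A))) :
    ∃ w : ReducedWord G A A, ReducedWord.prod (MulEquiv.refl (↥A)) w = g := by
  rcases TransversalPair.nonempty G A A with ⟨d⟩
  exact ⟨((equiv (MulEquiv.refl (↥A)) d) g).toReducedWord,
    (equiv (MulEquiv.refl (↥A)) d).symm_apply_apply g⟩

theorem head_mem_of_comm {w : ReducedWord G A A}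
    (hcomm : Commute (t : HNNExtension G A A (MulEquiv.refl (↥A))) (ReducedWord.prod (MulEquiv.refl (↥A)) w))
    (hc1 : List.Chain' (fun a b => a.2 ∈ toSubgroup A A a.1 → a.1 = b.1)
      ((((1 : ℤˣ), w.head)) :: w.toList))
    (hc2 : List.Chain' (fun a b => a.2 ∈ toSubgroup A A a.1 → a.1 = b.1)
      (w.toList ++ [((1 : ℤˣ), (1 : G))])) :
    w.head ∈ A := by
  have hp : ReducedWord.prod (MulEquiv.refl (↥A)) (⟨1, ((1 : ℤˣ), w.head) :: w.toList, hc1⟩ : ReducedWord G A A)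
      = ReducedWord.prod (MulEquiv.refl (↥A)) (⟨w.head, w.toList ++ [((1 : ℤˣ), (1 : G))], hc2⟩ :
        ReducedWord G A A) := by
    have h₁ : ReducedWord.prod (MulEquiv.refl (↥A))
        (⟨1, ((1 : ℤˣ), w.head) :: w.toList, hc1⟩ : ReducedWord G A A)
        = t * ReducedWord.prod (MulEquiv.refl (↥A)) w := by
      simp only [rprod_def, List.map_cons, List.prod_cons, map_one, one_mul,
        Units.val_one, zpow_one]
      group
    have h₂ : ReducedWord.prod (MulEquiv.refl (↥A))
        (⟨w.head, w.toList ++ [((1 : ℤˣ), (1 : G))], hc2⟩ : ReducedWord G A A)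
        = ReducedWord.prod (MulEquiv.refl (↥A)) w * t := by
      simp only [rprod_def, List.map_append, List.map_cons, List.map_nil,
        List.prod_append, List.prod_cons, List.prod_nil, map_one, Units.val_one,
        zpow_one, mul_one]
      group
    rw [h₁, h₂, hcomm.eq]
  have hres := (ReducedWord.map_fst_eq_and_of_prod_eq (MulEquiv.refl (↥A)) hp).2 1 (by simp)
  simpa using hres

/-- Multiply a reduced word on the right by an element of `G`, preserving length. -/
theorem exists_mul_of_right (w : ReducedWord G A A) (c : G) :
    ∃ w' : ReducedWord G A A, ReducedWord.prod (MulEquiv.refl (↥A)) w' = ReducedWord.prod (MulEquiv.refl (↥A)) w * of c ∧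
      w'.toList.length = w.toList.length := by
  rcases List.eq_nil_or_concat w.toList with hnil | ⟨L, q, hL⟩
  · refine ⟨⟨w.head * c, [], List.isChain_nil⟩, ?_, by simp [hnil]⟩
    simp [rprod_def, hnil, map_mul]
  · rw [List.concat_eq_append] at hL
    have hchain := w.chain
    rw [hL] at hchain
    rw [List.isChain_append] at hchain
    refine ⟨⟨w.head, L ++ [(q.1, q.2 * c)], ?_⟩, ?_, by simp [hL]⟩
    · rw [List.isChain_append]
      refine ⟨hchain.1, List.isChain_singleton _, ?_⟩
      intro x hx y hy
      simp only [List.head?_cons, Option.mem_some_iff] at hy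
      subst hy
      exact fun h => hchain.2.2 x hx (q.1, q.2) (by simp) h
    · simp only [rprod_def]
      rw [hL]
      simp only [List.map_append, List.prod_append, List.map_cons, List.map_nil,
        List.prod_cons, List.prod_nil, map_mul]
      group

theorem commute_t_mem_closure (g : HNNExtension G A A (MulEquiv.refl (↥A)))
    (hg : Commute (t : HNNExtension G A A (MulEquiv.refl (↥A))) g) :
    g ∈ Subgroup.closure ((of '' (A : Set G)) ∪ {(t : HNNExtension G A A (MulEquiv.refl (↥A)))}) := by
  have tmem : (t : HNNExtension G A A (MulEquiv.refl (↥A))) ∈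
      Subgroup.closure ((of '' (A : Set G)) ∪ {(t : HNNExtension G A A (MulEquiv.refl (↥A)))}) :=
    Subgroup.subset_closure (Or.inr rfl)
  obtain ⟨w, hw⟩ := exists_reducedWord g
  suffices H : ∀ n (w : ReducedWord G A A), w.toList.length = n →
      Commute (t : HNNExtension G A A (MulEquiv.refl (↥A))) (ReducedWord.prod (MulEquiv.refl (↥A)) w) →
      ReducedWord.prod (MulEquiv.refl (↥A)) w ∈
        Subgroup.closure ((of '' (A : Set G)) ∪ {(t : HNNExtension G A A (MulEquiv.refl (↥A)))}) by
    rw [← hw]; exact H _ w rfl (hw ▸ hg)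
  intro n
  induction n using Nat.strong_induction_on with
  | _ n ih =>
  intro w hlen hcomm
  by_cases hA : w.head ∈ A
  · rcases hl : w.toList with _ | ⟨p, L'⟩
    · apply Subgroup.subset_closure
      left
      refine ⟨w.head, hA, ?_⟩
      simp [ReducedWord.prod, hl]
    · -- left surgery: move `t ^ p.1` to the front
      have hchain := w.chain
      rw [hl, List.isChain_cons] at hchain
      set w' : ReducedWord G A A := ⟨w.head * p.2, L', hchain.2⟩ with hw'def
      have hcel : Commute (of w.head : HNNExtension G A A (MulEquiv.refl (↥A))) (t ^ (p.1 : ℤ)) :=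
        ((t_comm_of hA).symm).zpow_right _
      have key : ∀ R : HNNExtension G A A (MulEquiv.refl (↥A)),
          HNNExtension.of w.head * ((t ^ ((p.1 : ℤˣ) : ℤ) * HNNExtension.of p.2) * R)
            = t ^ ((p.1 : ℤˣ) : ℤ) * ((HNNExtension.of w.head * HNNExtension.of p.2) * R) := by
        intro R
        rw [← mul_assoc, ← mul_assoc, hcel.eq]
        group
      have hprod : ReducedWord.prod (MulEquiv.refl (↥A)) w = t ^ (p.1 : ℤ) * ReducedWord.prod (MulEquiv.refl (↥A)) w' := by
        simp only [rprod_def, hw'def]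
        rw [hl]
        simp only [List.map_cons, List.prod_cons, map_mul]
        exact key _
      have hcomm' : Commute (t : HNNExtension G A A (MulEquiv.refl (↥A))) (ReducedWord.prod (MulEquiv.refl (↥A)) w') := by
        have : ReducedWord.prod (MulEquiv.refl (↥A)) w' = (t ^ (p.1 : ℤ))⁻¹ * ReducedWord.prod (MulEquiv.refl (↥A)) w := by
          rw [hprod]; group
        rw [this]
        exact (((Commute.refl t).zpow_right _).inv_right).mul_right hcomm
      have hmem' := ih L'.length (by rw [hl, List.length_cons] at hlen; omega) w' rfl hcomm'
      rw [hprod]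
      exact Subgroup.mul_mem _ (Subgroup.zpow_mem _ tmem _) hmem'
  · rcases List.eq_nil_or_concat w.toList with hnil | ⟨L, q, hL⟩
    on_goal 2 => rw [List.concat_eq_append] at hL
    · -- contradiction directly
      exact absurd (head_mem_of_comm (w := w) hcomm (by simp [hnil, List.Chain']) (by simp [hnil, List.Chain'])) hA
    · by_cases hB : q.2 ∈ toSubgroup A A q.1 ∧ q.1 = (-1 : ℤˣ)
      · -- right surgery
        have hchain := w.chain
        rw [hL, List.isChain_append] at hchain
        have hq2 : q.2 ∈ A := by
          have := hB.1; rwa [hB.2, toSubgroup_neg_one] at this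
        set w₀ : ReducedWord G A A := ⟨w.head, L, hchain.1⟩ with hw₀def
        have hsplit : ReducedWord.prod (MulEquiv.refl (↥A)) w =
            (ReducedWord.prod (MulEquiv.refl (↥A)) w₀ * of q.2) * t⁻¹ := by
          simp only [rprod_def, hw₀def]
          rw [hL]
          simp only [List.map_append, List.prod_append, List.map_cons, List.map_nil,
            List.prod_cons, List.prod_nil]
          rw [hB.2]
          have : (t : HNNExtension G A A (MulEquiv.refl (↥A))) ^ ((-1 : ℤˣ) : ℤ) * of q.2
              = of q.2 * t⁻¹ := by
            simp only [Units.val_neg, Units.val_one, zpow_neg, zpow_one]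
            exact (inv_t_mul_of (φ := (MulEquiv.refl (↥A))) ⟨q.2, hq2⟩)
          rw [this]
          group
        obtain ⟨w'', hw''prod, hw''len⟩ := exists_mul_of_right w₀ q.2
        have hlen'' : w''.toList.length < n := by
          rw [hw''len, hw₀def]
          simp only [hL] at hlen
          simp at hlen ⊢
          omega
        have hcomm'' : Commute (t : HNNExtension G A A (MulEquiv.refl (↥A)))
            (ReducedWord.prod (MulEquiv.refl (↥A)) w'') := by
          rw [hw''prod]
          have : ReducedWord.prod (MulEquiv.refl (↥A)) w₀ * of q.2 = ReducedWord.prod (MulEquiv.refl (↥A)) w * t := by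
            rw [hsplit]; group
          rw [this]
          exact hcomm.mul_right (Commute.refl t)
        have hmem'' := ih _ hlen'' w'' rfl hcomm''
        rw [hsplit, ← hw''prod]
        exact Subgroup.mul_mem _ hmem'' (Subgroup.inv_mem _ tmem)
      · -- contradiction
        refine absurd (head_mem_of_comm (w := w) hcomm ?_ ?_) hA
        · rw [List.Chain', List.isChain_cons]
          refine ⟨?_, w.chain⟩
          intro y _
          intro hmem
          rw [toSubgroup_one] at hmem
          exact absurd hmem hA
        · rw [List.Chain', List.isChain_append]
          refine ⟨w.chain, List.isChain_singleton _, ?_⟩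
          intro x hx y hy hxmem
          rw [hL] at hx
          simp only [List.getLast?_concat, Option.mem_some_iff] at hx
          subst hx
          simp only [List.head?_cons, Option.mem_some_iff] at hy
          subst hy
          rcases Int.units_eq_one_or q.1 with h1 | h1
          · exact h1
          · exact absurd ⟨hxmem, h1⟩ hB

end RaagAux

namespace RaagAux

open HNNExtension

variable {V : Type*} {Γ : SimpleGraph V}

section Decomp

variable (Γ) (x : V)

/-- Generators of the link subgroup inside the RAAG of the graph minus `x`. -/
def linkGens : Set (RAAG (Γ.induce {v | v ≠ x})) :=
  {g | ∃ v : ({v | v ≠ x} : Set V), Γ.Adj x v.val ∧ g = RAAG.gen (Γ.induce {v | v ≠ x}) v}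

/-- The link subgroup. -/
noncomputable def linkSub : Subgroup (RAAG (Γ.induce {v | v ≠ x})) :=
  Subgroup.closure (linkGens Γ x)

open Classical in
/-- The map from the RAAG to the HNN extension of the vertex-deleted RAAG. -/
noncomputable def toHNN : RAAG Γ →*
    HNNExtension (RAAG (Γ.induce {v | v ≠ x})) (linkSub Γ x) (linkSub Γ x)
      (MulEquiv.refl _) :=
  raagLift Γ (fun v => if h : v = x then t
      else HNNExtension.of (RAAG.gen (Γ.induce {v | v ≠ x}) (⟨v, h⟩ : ({v | v ≠ x} : Set V))))
    (by
      intro u v huv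
      beta_reduce
      by_cases hu : u = x
      · by_cases hv : v = x
        · exact absurd (hu ▸ hv ▸ huv) (Γ.irrefl)
        · rw [dif_pos hu, dif_neg hv]
          refine t_comm_of (Subgroup.subset_closure ?_)
          exact ⟨⟨v, hv⟩, hu ▸ huv, rfl⟩
      · by_cases hv : v = x
        · rw [dif_pos hv, dif_neg hu]
          refine (t_comm_of (Subgroup.subset_closure ?_)).symm
          exact ⟨⟨u, hu⟩, hv ▸ huv.symm, rfl⟩
        · rw [dif_neg hu, dif_neg hv]
          exact (gen_commute_of_adj (by exact huv)).map HNNExtension.of)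

open Classical in
theorem toHNN_gen (v : V) : toHNN Γ x (RAAG.gen Γ v) =
    if h : v = x then t
    else HNNExtension.of (RAAG.gen (Γ.induce {v | v ≠ x}) (⟨v, h⟩ : ({v | v ≠ x} : Set V))) :=
  raagLift_gen ..

theorem toHNN_gen_self : toHNN Γ x (RAAG.gen Γ x) = t := by
  rw [toHNN_gen, dif_pos rfl]

theorem toHNN_gen_ne {v : V} (h : v ≠ x) : toHNN Γ x (RAAG.gen Γ v) =
    HNNExtension.of (RAAG.gen (Γ.induce {v | v ≠ x}) (⟨v, h⟩ : ({v | v ≠ x} : Set V))) := by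
  rw [toHNN_gen, dif_neg h]

theorem commute_gen_inclHom_linkSub (a : RAAG (Γ.induce {v | v ≠ x}))
    (ha : a ∈ linkSub Γ x) :
    Commute (RAAG.gen Γ x) (inclHom {v | v ≠ x} a) := by
  have hmem : inclHom (Γ := Γ) {v | v ≠ x} a ∈
      Subgroup.closure (inclHom (Γ := Γ) {v | v ≠ x} '' linkGens Γ x) := by
    rw [← MonoidHom.map_closure]
    exact Subgroup.mem_map_of_mem _ ha
  refine commute_of_mem_closure ?_ hmem
  rintro _ ⟨_, ⟨v, hv, rfl⟩, rfl⟩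
  rw [inclHom_gen]
  exact gen_commute_of_adj hv

/-- The map back from the HNN extension. -/
noncomputable def fromHNN :
    HNNExtension (RAAG (Γ.induce {v | v ≠ x})) (linkSub Γ x) (linkSub Γ x)
      (MulEquiv.refl _) →* RAAG Γ :=
  HNNExtension.lift (inclHom {v | v ≠ x}) (RAAG.gen Γ x) (by
    intro a
    exact (commute_gen_inclHom_linkSub Γ x a.val a.2).eq)

theorem fromHNN_toHNN (g : RAAG Γ) : fromHNN Γ x (toHNN Γ x g) = g := by
  have : (fromHNN Γ x).comp (toHNN Γ x) = MonoidHom.id _ := by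
    apply raag_hom_ext
    intro v
    by_cases hv : v = x
    · subst hv
      rw [MonoidHom.comp_apply, toHNN_gen_self]
      simp [fromHNN]
      exact HNNExtension.lift_t _ _ _
    · rw [MonoidHom.comp_apply, toHNN_gen_ne Γ x hv]
      simp only [fromHNN, HNNExtension.lift_of, MonoidHom.id_apply]
      exact inclHom_gen _ _
  exact DFunLike.congr_fun this g

theorem toHNN_injective : Function.Injective (toHNN Γ x) :=
  Function.LeftInverse.injective (fromHNN_toHNN Γ x)

/-- Centralizer of a standard generator lies in the subgroup generated by the star. -/
theorem mem_star_closure_of_commute {g : RAAG Γ}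
    (hc : Commute (RAAG.gen Γ x) g) :
    g ∈ Subgroup.closure (RAAG.gen Γ '' (insert x (Γ.neighborSet x))) := by
  have h1 : Commute (t : HNNExtension (RAAG (Γ.induce {v | v ≠ x})) (linkSub Γ x)
      (linkSub Γ x) (MulEquiv.refl _)) (toHNN Γ x g) := by
    have := hc.map (toHNN Γ x)
    rwa [toHNN_gen_self] at this
  have h2 := commute_t_mem_closure _ h1
  have h3 : Subgroup.closure
      ((HNNExtension.of '' ((linkSub Γ x : Subgroup _) : Set _)) ∪
        {(t : HNNExtension (RAAG (Γ.induce {v | v ≠ x})) (linkSub Γ x)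
          (linkSub Γ x) (MulEquiv.refl _))}) ≤
      Subgroup.map (toHNN Γ x)
        (Subgroup.closure (RAAG.gen Γ '' (insert x (Γ.neighborSet x)))) := by
    rw [Subgroup.closure_le]
    rintro _ (⟨a, ha, rfl⟩ | rfl)
    · have hmem : (HNNExtension.of : RAAG (Γ.induce {v | v ≠ x}) →*
          HNNExtension (RAAG (Γ.induce {v | v ≠ x})) (linkSub Γ x) (linkSub Γ x)
            (MulEquiv.refl _)) a ∈
          Subgroup.closure ((HNNExtension.of : RAAG (Γ.induce {v | v ≠ x}) →*
            HNNExtension (RAAG (Γ.induce {v | v ≠ x})) (linkSub Γ x) (linkSub Γ x)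
              (MulEquiv.refl _)) '' linkGens Γ x) := by
        rw [← MonoidHom.map_closure]
        exact Subgroup.mem_map_of_mem _ ha
      refine SetLike.le_def.1 ?_ hmem
      rw [Subgroup.closure_le]
      rintro _ ⟨_, ⟨v, hv, rfl⟩, rfl⟩
      have hvx : v.val ≠ x := v.2
      refine ⟨RAAG.gen Γ v.val, ?_, ?_⟩
      · exact Subgroup.subset_closure ⟨v.val, Or.inr hv, rfl⟩
      · rw [toHNN_gen_ne Γ x hvx, Subtype.coe_eta]
    · refine ⟨RAAG.gen Γ x, ?_, toHNN_gen_self Γ x⟩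
      exact Subgroup.subset_closure ⟨x, Or.inl rfl, rfl⟩
  obtain ⟨g', hg', heq⟩ := h3 h2
  rwa [← toHNN_injective Γ x heq]

end Decomp

end RaagAux

namespace RaagAux

variable {V : Type*} {Γ : SimpleGraph V}

theorem vertex_unique {x y : V} {k m : RAAG Γ}
    (h : k⁻¹ * RAAG.gen Γ x * k = m⁻¹ * RAAG.gen Γ y * m) : x = y := by
  by_contra hne
  have h2 := congrArg (expSum Γ y) h
  rw [expSum_conj, expSum_conj, expSum_gen, expSum_gen, if_pos rfl, if_neg hne] at h2
  exact absurd (Multiplicative.ofAdd.injective h2) (by norm_num)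

/-- The key lemma: distinct commuting conjugates of generators have adjacent
underlying vertices. -/
theorem adj_of_conj_commute {x y : V} {k m : RAAG Γ}
    (hne : k⁻¹ * RAAG.gen Γ x * k ≠ m⁻¹ * RAAG.gen Γ y * m)
    (hc : Commute (k⁻¹ * RAAG.gen Γ x * k) (m⁻¹ * RAAG.gen Γ y * m)) :
    Γ.Adj x y := by
  classical
  set c : RAAG Γ := m * k⁻¹ with hcdef
  set f : RAAG Γ →* RAAG Γ := (MulAut.conj k).toMonoidHom with hfdef
  have hfa : f (k⁻¹ * RAAG.gen Γ x * k) = RAAG.gen Γ x := by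
    simp [hfdef, MulAut.conj_apply, mul_assoc]
  have hfb : f (m⁻¹ * RAAG.gen Γ y * m) = c⁻¹ * RAAG.gen Γ y * c := by
    simp [hfdef, hcdef, MulAut.conj_apply, mul_assoc]
  have hc' : Commute (RAAG.gen Γ x) (c⁻¹ * RAAG.gen Γ y * c) := by
    have := hc.map f
    rwa [hfa, hfb] at this
  have hne' : RAAG.gen Γ x ≠ c⁻¹ * RAAG.gen Γ y * c := by
    intro h
    apply hne
    have h2 : f (k⁻¹ * RAAG.gen Γ x * k) = f (m⁻¹ * RAAG.gen Γ y * m) := by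
      rw [hfa, hfb, h]
    exact (MulAut.conj k).injective h2
  have hmem := mem_star_closure_of_commute Γ x hc'
  by_contra hadj
  by_cases hxy : y = x
  · -- same vertex: contradiction via the retraction to the star
    subst hxy
    set S : Set V := insert y (Γ.neighborSet y) with hSdef
    have hrange : c⁻¹ * RAAG.gen Γ y * c ∈ (inclHom (Γ := Γ) S).range := by
      rw [← closure_gen_image_eq_range]
      exact hmem
    obtain ⟨w, hw⟩ := hrange
    have hfix : inclHom (Γ := Γ) S (projHom S (c⁻¹ * RAAG.gen Γ y * c)) =
        c⁻¹ * RAAG.gen Γ y * c := by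
      rw [← hw, projHom_inclHom]
    have hyS : y ∈ S := Set.mem_insert _ _
    have hproj : projHom (Γ := Γ) S (c⁻¹ * RAAG.gen Γ y * c) =
        RAAG.gen (Γ.induce S) ⟨y, hyS⟩ := by
      rw [map_mul, map_mul, map_inv, projHom_gen, dif_pos hyS]
      have hcent : Commute (RAAG.gen (Γ.induce S) ⟨y, hyS⟩) (projHom (Γ := Γ) S c) := by
        refine commute_of_forall_gen ?_ _
        intro v
        rcases v.2 with hvx | hvn
        · have : v = (⟨y, hyS⟩ : ↥S) := Subtype.ext hvx
          rw [this]
        · exact gen_commute_of_adj (by exact hvn)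
      rw [mul_assoc, hcent.eq, ← mul_assoc, inv_mul_cancel, one_mul]
    rw [hproj, inclHom_gen] at hfix
    exact hne' hfix
  · -- different vertices: contradiction via exponent sums
    have hyS : y ∉ insert x (Γ.neighborSet x) := by
      intro h
      rcases h with h | h
      · exact hxy h
      · exact hadj h
    have h1 : expSum Γ y (c⁻¹ * RAAG.gen Γ y * c) = 1 :=
      expSum_eq_one_of_mem_closure hyS hmem
    rw [expSum_conj, expSum_gen, if_pos rfl] at h1
    exact absurd (Multiplicative.ofAdd.injective h1) (by norm_num)

end RaagAux

namespace RaagAux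

variable {V : Type*} {Γ : SimpleGraph V}

/-- The canonical map from vertices to extension-graph vertices. -/
noncomputable def extOf (v : V) : ExtVertex Γ := ⟨RAAG.gen Γ v, v, 1, by group⟩

theorem extOf_injective : Function.Injective (extOf (Γ := Γ)) := fun u v h =>
  gen_injective Γ (congrArg Subtype.val h)

/-- The underlying vertex of an extension-graph vertex. -/
noncomputable def extVert (u : ExtVertex Γ) : V := u.2.choose

theorem extVert_spec (u : ExtVertex Γ) :
    ∃ h : RAAG Γ, u.val = h⁻¹ * RAAG.gen Γ (extVert u) * h := u.2.choose_spec

theorem adj_extVert {u w : ExtVertex Γ} (h : (extGraph Γ).Adj u w) :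
    Γ.Adj (extVert u) (extVert w) := by
  obtain ⟨k, hk⟩ := extVert_spec u
  obtain ⟨m, hm⟩ := extVert_spec w
  have hne : u.val ≠ w.val := fun hv => h.1 (Subtype.ext hv)
  exact adj_of_conj_commute (by rw [← hk, ← hm]; exact hne)
    (by rw [← hk, ← hm]; exact h.2)

theorem nclique_iff (Γ : SimpleGraph V) (n : ℕ) :
    (∃ s, (extGraph Γ).IsNClique n s) ↔ (∃ s, Γ.IsNClique n s) := by
  classical
  constructor
  · rintro ⟨s, hs⟩
    refine ⟨s.image extVert, ?_, ?_⟩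
    · intro a ha b hb hab
      rw [Finset.coe_image] at ha hb
      obtain ⟨u, hu, rfl⟩ := ha
      obtain ⟨w, hw, rfl⟩ := hb
      have huw : u ≠ w := fun h => hab (by rw [h])
      exact adj_extVert (hs.1 hu hw huw)
    · rw [Finset.card_image_of_injOn, hs.2]
      intro a ha b hb hab
      by_contra hne
      exact (adj_extVert (hs.1 ha hb hne)).ne hab
  · rintro ⟨s, hs⟩
    refine ⟨s.image extOf, ?_, ?_⟩
    · intro a ha b hb hab
      rw [Finset.coe_image] at ha hb
      obtain ⟨u, hu, rfl⟩ := ha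
      obtain ⟨w, hw, rfl⟩ := hb
      have huw : u ≠ w := fun h => hab (by rw [h])
      refine ⟨hab, ?_⟩
      exact gen_commute_of_adj (hs.1 hu hw huw)
    · rw [Finset.card_image_of_injective _ extOf_injective, hs.2]

end RaagAux

/-- The clique number of the extension graph equals the clique number of the graph. -/
theorem extGraph_cliqueNum
    {V : Type*} [Fintype V] (Γ : SimpleGraph V) :
    (extGraph Γ).cliqueNum = Γ.cliqueNum := by
  unfold SimpleGraph.cliqueNum
  congr 1
  ext n
  simp only [Set.mem_setOf_eq]
  exact RaagAux.nclique_iff Γ n
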